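/- Let (s,t) ∈ ℚ²∖ℤ² with 0 ≤ s < 1 and 0 ≤ t < 1, and let L be a positive integer with Ls, Lt ∈ ℤ. Write z(τ) := sτ+t and ω_{c,d}(τ) := cτ+d. Define f*_{(s,t)}(τ) := ∑_{c ∈ ℤ∖{0}, d ∈ ℤ} ((2 − z(τ)/ω_{c,d}(τ))·z(τ) / (1 − z(τ)/ω_{c,d}(τ))²)·(1/ω_{c,d}(τ)³). Then f*_{(s,t)}(τ) → 0 as Im τ → ∞ subject to |Re τ| ≤ L. -/

import Mathlib

/-- The lattice `ℤτ + ℤ`. -/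
def lat (τ : ℂ) : Set ℂ := {w : ℂ | ∃ m n : ℤ, w = (m : ℂ) * τ + (n : ℂ)}

/-- The Weierstrass ℘-function attached to a set `Ω ⊂ ℂ`. -/
noncomputable def wp (Ω : Set ℂ) (z : ℂ) : ℂ :=
  1 / z ^ 2 + ∑' ω : {w : ℂ // w ∈ Ω ∧ w ≠ 0}, (1 / (z - (ω : ℂ)) ^ 2 - 1 / (ω : ℂ) ^ 2)

/-- `f_{(s,t)}(τ) = ℘(τ, sτ + t)`, where `℘(τ,z) = ℘(τℤ+ℤ, z)`. -/
noncomputable def f (s t : ℚ) (τ : ℂ) : ℂ := wp (lat τ) ((s : ℂ) * τ + (t : ℂ))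

/-- The tail `f*_{(s,t)}(τ) = ∑_{c ≠ 0, d ∈ ℤ}
`((2 − z/ω)·z / (1 − z/ω)²)·(1/ω³)` with `z = sτ+t`, `ω = cτ+d`. -/
noncomputable def fstar (s t : ℚ) (τ : ℂ) : ℂ :=
  ∑' p : {p : ℤ × ℤ // p.1 ≠ 0},
    ((2 - ((s : ℂ) * τ + t) / (((p : ℤ × ℤ).1 : ℂ) * τ + ((p : ℤ × ℤ).2 : ℂ))) *
        ((s : ℂ) * τ + t) /
        (1 - ((s : ℂ) * τ + t) / (((p : ℤ × ℤ).1 : ℂ) * τ + ((p : ℤ × ℤ).2 : ℂ))) ^ 2) *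
      (1 / (((p : ℤ × ℤ).1 : ℂ) * τ + ((p : ℤ × ℤ).2 : ℂ)) ^ 3)


noncomputable def wgtinv (d : ℤ) : ℝ :=
  if d = 0 then 1 else (|(d : ℝ)|) ^ (-(3/2) : ℝ)

noncomputable def hw (p : ℤ × ℤ) : ℝ :=
  (|(p.1 : ℝ)|) ^ (-(3/2) : ℝ) * wgtinv p.2

lemma wgtinv_nonneg (d : ℤ) : 0 ≤ wgtinv d := by
  unfold wgtinv; split
  · norm_num
  · positivity

lemma hw_nonneg (p : ℤ × ℤ) : 0 ≤ hw p := by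
  unfold hw; exact mul_nonneg (by positivity) (wgtinv_nonneg _)

lemma summable_wgtinv : Summable wgtinv := by
  have h1 : Summable fun d : ℤ => |(d : ℝ)| ^ (-(3/2) : ℝ) :=
    Real.summable_abs_int_rpow (by norm_num)
  have h2 : Summable fun d : ℤ => (if d = 0 then (1:ℝ) else 0) :=
    summable_of_ne_finset_zero (s := {0}) (by intro b hb; simp at hb ⊢; exact fun h => absurd h hb)
  apply (h1.add h2).congr
  intro d
  unfold wgtinv
  by_cases hd : d = 0 <;> simp [hd, Real.zero_rpow (by norm_num : (-(3/2):ℝ) ≠ 0)]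

lemma summable_hw : Summable hw :=
  (Real.summable_abs_int_rpow (b := (3/2:ℝ)) (by norm_num)).mul_of_nonneg summable_wgtinv
    (fun _ => by positivity) wgtinv_nonneg

/-- Key lower bound on `‖cτ+d‖³`. -/

lemma rpow_three_halves_sq {x : ℝ} (hx : 0 ≤ x) : (x ^ ((3:ℝ)/2)) ^ 2 = x ^ 3 := by
  rw [← Real.rpow_natCast (x ^ ((3:ℝ)/2)) 2, ← Real.rpow_mul hx, ← Real.rpow_natCast x 3]
  norm_num

/-- Key lower bound on `‖cτ+d‖³`. -/
lemma omega_cube_lb (τ : ℂ) (Lr : ℝ) (hLr : 1 ≤ Lr) (hre : |τ.re| ≤ Lr)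
    (him : 2 * Lr ≤ τ.im) (c d : ℤ) (hc : c ≠ 0) :
    τ.im ^ ((3:ℝ)/2) * ((|(c:ℝ)| ^ ((3:ℝ)/2)) * (wgtinv d)⁻¹) ≤
      3 * ‖(c : ℂ) * τ + (d : ℂ)‖ ^ 3 := by
  set x := τ.re with hx
  set y := τ.im with hy
  have hy2 : (2:ℝ) ≤ y := le_trans (by linarith) him
  have hy0 : (0:ℝ) < y := by linarith
  have hc1 : (1:ℝ) ≤ |(c:ℝ)| := by
    rw [← Int.cast_abs]; exact_mod_cast Int.one_le_abs hc
  set a : ℝ := |(c:ℝ)| * y with hadef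
  have ha1 : (1:ℝ) ≤ a := by rw [hadef]; nlinarith
  have hsq : ‖(c : ℂ) * τ + (d : ℂ)‖ ^ 2 = ((c:ℝ) * x + d) ^ 2 + ((c:ℝ) * y) ^ 2 := by
    rw [Complex.sq_norm, Complex.normSq_apply]
    simp [hx, hy]
    ring
  have hca : ((c:ℝ) * y) ^ 2 = a ^ 2 := by
    rw [hadef, mul_pow, mul_pow, sq_abs]
  have hxL : x ^ 2 ≤ Lr ^ 2 := by nlinarith [sq_abs x, abs_nonneg x]
  have hx2 : x ^ 2 ≤ y ^ 2 / 4 := by nlinarith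
  have hlow : ((d:ℝ) ^ 2 + a ^ 2) / 2 ≤ ‖(c : ℂ) * τ + (d : ℂ)‖ ^ 2 := by
    rw [hsq, ← hca]
    nlinarith [sq_nonneg (2 * (c:ℝ) * x + d),
      mul_le_mul_of_nonneg_left hx2 (sq_nonneg (c:ℝ))]
  have hnn : (0:ℝ) ≤ ‖(c : ℂ) * τ + (d : ℂ)‖ := norm_nonneg _
  have hlow3 : (((d:ℝ) ^ 2 + a ^ 2) / 2) ^ 3 ≤ (‖(c : ℂ) * τ + (d : ℂ)‖ ^ 2) ^ 3 :=
    pow_le_pow_left₀ (by positivity) hlow 3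
  -- reduce to squares
  rw [← pow_le_pow_iff_left₀
    (mul_nonneg (by positivity) (mul_nonneg (by positivity) (inv_nonneg.mpr (wgtinv_nonneg d))))
    (by positivity) (two_ne_zero)]
  have hsq6 : (3 * ‖(c : ℂ) * τ + (d : ℂ)‖ ^ 3) ^ 2 = 9 * (‖(c : ℂ) * τ + (d : ℂ)‖ ^ 2) ^ 3 := by
    ring
  rw [hsq6, mul_pow, mul_pow, rpow_three_halves_sq hy0.le, rpow_three_halves_sq (abs_nonneg _)]
  by_cases hd : d = 0
  · subst hd
    simp only [wgtinv, if_pos rfl, inv_one, one_pow, mul_one]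
    have h1 : (a ^ 2 / 2) ^ 3 ≤ (‖(c : ℂ) * τ + ((0:ℤ) : ℂ)‖ ^ 2) ^ 3 := by
      simpa using hlow3
    have h2 : a ^ 3 ≤ a ^ 6 := pow_le_pow_right₀ ha1 (by norm_num)
    have h3 : y ^ 3 * (|(c:ℝ)| ^ 3 * (1:ℝ)⁻¹ ^ 2) = a ^ 3 := by rw [hadef]; ring
    push_cast at h1 ⊢
    rw [h3]
    have e : (a ^ 2 / 2) ^ 3 = a ^ 6 / 8 := by ring
    rw [e] at h1
    have hnn' : (0:ℝ) ≤ (‖(c:ℂ) * τ + 0‖ ^ 2) ^ 3 := by positivity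
    linarith [h1, h2, hnn']
  · simp only [wgtinv, if_neg hd]
    rw [Real.rpow_neg (abs_nonneg _), inv_inv, rpow_three_halves_sq (abs_nonneg _)]
    have hd1 : (1:ℝ) ≤ |(d:ℝ)| := by
      rw [← Int.cast_abs]; exact_mod_cast Int.one_le_abs hd
    have hda : |(d:ℝ)| * a ≤ ((d:ℝ) ^ 2 + a ^ 2) / 2 := by
      nlinarith [sq_nonneg (|(d:ℝ)| - a), sq_abs (d:ℝ)]
    have hcube : (|(d:ℝ)| * a) ^ 3 ≤ (((d:ℝ) ^ 2 + a ^ 2) / 2) ^ 3 :=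
      pow_le_pow_left₀ (by positivity) hda 3
    have h3 : y ^ 3 * (|(c:ℝ)| ^ 3 * |(d:ℝ)| ^ 3) = (|(d:ℝ)| * a) ^ 3 := by
      rw [hadef]; ring
    rw [h3]
    linarith [hcube, hlow3, pow_nonneg (pow_nonneg hnn 2) 3]

lemma wgtinv_pos (d : ℤ) : 0 < wgtinv d := by
  unfold wgtinv; split
  · norm_num
  · rename_i h
    exact Real.rpow_pos_of_pos (abs_pos.mpr (by exact_mod_cast h)) _

set_option maxHeartbeats 2000000 in
/-- for `(s,t) ∈ ℚ²∖ℤ²` with `0 ≤ s < 1`, `0 ≤ t < 1` and `L` a positive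
common denominator of `s,t`, `f*_{(s,t)}(τ) → 0` as `Im τ → ∞` subject to `|Re τ| ≤ L`. -/
theorem fstar_tendsto_zero (s t : ℚ) (hst : ¬ ∃ m n : ℤ, s = (m : ℚ) ∧ t = (n : ℚ))
    (hs0 : 0 ≤ s) (hs1 : s < 1) (ht0 : 0 ≤ t) (ht1 : t < 1)
    (L : ℕ) (hL : 0 < L) (hLs : ∃ m : ℤ, (L : ℚ) * s = (m : ℚ))
    (hLt : ∃ n : ℤ, (L : ℚ) * t = (n : ℚ)) :
    ∀ ε : ℝ, 0 < ε → ∃ M : ℝ, ∀ τ : ℂ, |τ.re| ≤ (L : ℝ) → M ≤ τ.im →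
      ‖fstar s t τ‖ < ε := by
  intro ε hε
  set sr : ℝ := (s : ℝ) with hsrdef
  set tr : ℝ := (t : ℝ) with htrdef
  have hsr0 : 0 ≤ sr := by rw [hsrdef]; exact_mod_cast hs0
  have hsr1 : sr < 1 := by rw [hsrdef]; exact_mod_cast hs1
  have htr0 : 0 ≤ tr := by rw [htrdef]; exact_mod_cast ht0
  have htr1 : tr < 1 := by rw [htrdef]; exact_mod_cast ht1
  set Lr : ℝ := (L : ℝ) with hLrdef
  have hLr : 1 ≤ Lr := by rw [hLrdef]; exact_mod_cast hL
  set s' : ℝ := (1 + sr) / 2 with hs'def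
  have hs'1 : s' < 1 := by rw [hs'def]; linarith
  have hs'0 : 0 ≤ s' := by rw [hs'def]; linarith
  have h1s' : 0 < 1 - s' := by linarith
  set C : ℝ := 9 / (1 - s') ^ 2 with hCdef
  have hC : 0 < C := by positivity
  have hsub : Summable (fun p : {p : ℤ × ℤ // p.1 ≠ 0} => hw ↑p) := summable_hw.subtype _
  set A : ℝ := ∑' p : {p : ℤ × ℤ // p.1 ≠ 0}, hw ↑p with hAdef
  have hA0 : 0 ≤ A := tsum_nonneg fun p => hw_nonneg _
  refine ⟨max (max (2 * Lr) (2 * (sr * Lr + 1) / (1 - sr))) ((C * A / ε + 1) ^ 2), ?_⟩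
  intro τ hre him
  set y := τ.im with hydef
  have him1 : 2 * Lr ≤ y := le_trans ((le_max_left _ _).trans (le_max_left _ _)) him
  have him2 : 2 * (sr * Lr + 1) / (1 - sr) ≤ y :=
    le_trans ((le_max_right _ _).trans (le_max_left _ _)) him
  have him3 : (C * A / ε + 1) ^ 2 ≤ y := le_trans (le_max_right _ _) him
  have hy2 : (2 : ℝ) ≤ y := by linarith
  have hy0 : (0 : ℝ) < y := by linarith
  set z : ℂ := (s : ℂ) * τ + (t : ℂ) with hzdef
  -- bound on ‖z‖
  have hzb : ‖z‖ ≤ s' * y := by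
    have h1 : ‖z‖ ≤ sr * ‖τ‖ + tr := by
      rw [hzdef]
      refine le_trans (norm_add_le _ _) ?_
      rw [norm_mul]
      have e1 : ‖((s : ℚ) : ℂ)‖ = sr := by
        rw [show ((s : ℚ) : ℂ) = ((sr : ℝ) : ℂ) by push_cast; rfl]
        simp [Complex.norm_real, abs_of_nonneg hsr0]
      have e2 : ‖((t : ℚ) : ℂ)‖ = tr := by
        rw [show ((t : ℚ) : ℂ) = ((tr : ℝ) : ℂ) by push_cast; rfl]
        simp [Complex.norm_real, abs_of_nonneg htr0]
      rw [e1, e2]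
    have h2 : ‖τ‖ ≤ Lr + y := by
      refine le_trans ?_ (add_le_add hre (le_of_eq (abs_of_pos hy0)))
      exact Complex.norm_le_abs_re_add_abs_im τ
    have h3 : 2 * (sr * Lr + 1) ≤ y * (1 - sr) :=
      (div_le_iff₀ (by linarith)).mp him2 |>.trans_eq (by ring)
    have h4 : sr * ‖τ‖ ≤ sr * (Lr + y) := mul_le_mul_of_nonneg_left h2 hsr0
    rw [hs'def]
    nlinarith
  have hzy : ‖z‖ ≤ y := le_trans hzb (by nlinarith)
  -- pointwise bound
  have key : ∀ p : {p : ℤ × ℤ // p.1 ≠ 0},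
      ‖((2 - z / (((p : ℤ × ℤ).1 : ℂ) * τ + ((p : ℤ × ℤ).2 : ℂ))) * z /
          (1 - z / (((p : ℤ × ℤ).1 : ℂ) * τ + ((p : ℤ × ℤ).2 : ℂ))) ^ 2) *
        (1 / (((p : ℤ × ℤ).1 : ℂ) * τ + ((p : ℤ × ℤ).2 : ℂ)) ^ 3)‖ ≤
        C * (y * (y ^ ((3:ℝ)/2))⁻¹) * hw ↑p := by
    rintro ⟨⟨c, d⟩, hc⟩
    simp only
    set ω : ℂ := (c : ℂ) * τ + (d : ℂ) with hωdef
    have hc1 : (1 : ℝ) ≤ |(c : ℝ)| := by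
      rw [← Int.cast_abs]; exact_mod_cast Int.one_le_abs hc
    have hωy : y ≤ ‖ω‖ := by
      have h1 : ω.im = (c : ℝ) * y := by simp [hωdef, hydef]
      have h2 : |ω.im| ≤ ‖ω‖ := by
        exact Complex.abs_im_le_norm ω
      rw [h1, abs_mul, abs_of_pos hy0] at h2
      nlinarith
    have hωpos : 0 < ‖ω‖ := lt_of_lt_of_le hy0 hωy
    have hu : ‖z / ω‖ ≤ s' := by
      rw [norm_div, div_le_iff₀ hωpos]
      calc ‖z‖ ≤ s' * y := hzb
        _ ≤ s' * ‖ω‖ := mul_le_mul_of_nonneg_left hωy hs'0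
    have h2u : ‖2 - z / ω‖ ≤ 3 := by
      calc ‖2 - z / ω‖ ≤ ‖(2 : ℂ)‖ + ‖z / ω‖ := norm_sub_le _ _
        _ ≤ 2 + s' := by rw [Complex.norm_ofNat]; linarith
        _ ≤ 3 := by linarith
    have h1u : 1 - s' ≤ ‖1 - z / ω‖ := by
      have := norm_sub_norm_le (1 : ℂ) (z / ω)
      rw [norm_one] at this
      linarith
    set D : ℝ := y ^ ((3:ℝ)/2) * (|(c : ℝ)| ^ ((3:ℝ)/2) * (wgtinv d)⁻¹) with hDdef
    have hDpos : 0 < D := by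
      rw [hDdef]
      exact mul_pos (Real.rpow_pos_of_pos hy0 _)
        (mul_pos (Real.rpow_pos_of_pos (by linarith) _) (inv_pos.mpr (wgtinv_pos d)))
    have hD : D ≤ 3 * ‖ω‖ ^ 3 := omega_cube_lb τ Lr hLr hre him1 c d hc
    have f4 : 1 / ‖ω‖ ^ 3 ≤ 3 / D := by
      rw [div_le_div_iff₀ (by positivity) hDpos]
      nlinarith [hD]
    have f1 : ‖2 - z / ω‖ * ‖z‖ ≤ 3 * y :=
      mul_le_mul h2u hzy (norm_nonneg _) (by norm_num)
    have f2 : (1 - s') ^ 2 ≤ ‖1 - z / ω‖ ^ 2 := pow_le_pow_left₀ h1s'.le h1u 2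
    have f3 : ‖2 - z / ω‖ * ‖z‖ / ‖1 - z / ω‖ ^ 2 ≤ 3 * y / (1 - s') ^ 2 :=
      div_le_div₀ (by positivity) f1 (by positivity) f2
    have hnorm : ‖((2 - z / ω) * z / (1 - z / ω) ^ 2) * (1 / ω ^ 3)‖ =
        ‖2 - z / ω‖ * ‖z‖ / ‖1 - z / ω‖ ^ 2 * (1 / ‖ω‖ ^ 3) := by
      simp [norm_mul, norm_div, norm_pow]
    rw [hnorm]
    calc ‖2 - z / ω‖ * ‖z‖ / ‖1 - z / ω‖ ^ 2 * (1 / ‖ω‖ ^ 3)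
        ≤ (3 * y / (1 - s') ^ 2) * (3 / D) :=
          mul_le_mul f3 f4 (by positivity) (by positivity)
      _ = C * (y * (y ^ ((3:ℝ)/2))⁻¹) * hw (c, d) := by
          rw [hCdef, hDdef]
          unfold hw
          simp only
          rw [Real.rpow_neg (abs_nonneg (c:ℝ))]
          have hr1 : (y : ℝ) ^ ((3:ℝ)/2) ≠ 0 := (Real.rpow_pos_of_pos hy0 _).ne'
          have hr2 : (|(c:ℝ)|) ^ ((3:ℝ)/2) ≠ 0 := (Real.rpow_pos_of_pos (by linarith) _).ne'
          have hr3 : wgtinv d ≠ 0 := (wgtinv_pos d).ne'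
          have hr4 : ((1:ℝ) - s') ≠ 0 := h1s'.ne'
          field_simp
          ring
  -- sum up
  have hgsum : HasSum (fun p : {p : ℤ × ℤ // p.1 ≠ 0} =>
      C * (y * (y ^ ((3:ℝ)/2))⁻¹) * hw ↑p) (C * (y * (y ^ ((3:ℝ)/2))⁻¹) * A) :=
    hsub.hasSum.mul_left _
  have hbound : ‖fstar s t τ‖ ≤ C * (y * (y ^ ((3:ℝ)/2))⁻¹) * A := by
    rw [fstar]
    exact tsum_of_norm_bounded hgsum key
  -- final numeric estimate
  have hyq : y * (y ^ ((3:ℝ)/2))⁻¹ = (Real.sqrt y)⁻¹ := by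
    rw [show y * (y ^ ((3:ℝ)/2))⁻¹ = y ^ (1:ℝ) * y ^ (-((3:ℝ)/2)) by
      rw [Real.rpow_one, Real.rpow_neg hy0.le]]
    rw [← Real.rpow_add hy0, Real.sqrt_eq_rpow, ← Real.rpow_neg hy0.le]
    norm_num
  have hCA : 0 ≤ C * A / ε := by positivity
  have hsqy : C * A / ε + 1 ≤ Real.sqrt y := by
    have h1 : Real.sqrt ((C * A / ε + 1) ^ 2) ≤ Real.sqrt y := Real.sqrt_le_sqrt him3
    rwa [Real.sqrt_sq (by linarith)] at h1
  have hsqpos : 0 < Real.sqrt y := lt_of_lt_of_le (by linarith) hsqy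
  have h5 : C * (Real.sqrt y)⁻¹ * A = C * A / Real.sqrt y := by ring
  have h6 : C * A / Real.sqrt y ≤ C * A / (C * A / ε + 1) :=
    div_le_div_of_nonneg_left (mul_nonneg hC.le hA0) (by linarith) hsqy
  have h7 : C * A / (C * A / ε + 1) < ε := by
    rw [div_lt_iff₀ (by linarith)]
    have e : ε * (C * A / ε + 1) = C * A + ε := by field_simp
    rw [e]; linarith
  calc ‖fstar s t τ‖ ≤ C * (y * (y ^ ((3:ℝ)/2))⁻¹) * A := hbound
    _ = C * A / Real.sqrt y := by rw [hyq]; ring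
    _ ≤ C * A / (C * A / ε + 1) := h6
    _ < ε := h7
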